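/- On U = {(u,v,r,θ) ∈ ℝ⁴ : r ≠ 0}, let X₁ = (0,0, −cos θ, sin θ/r), X₂ = (0,0, sin θ, cos θ/r), X₃ = (0,0,0,1) be the E(2) symmetry vector fields, and define the functions f_I^î : U → ℝ (I, î ∈ {1,2,3}) with the only nonzero components f₁^3 = sin θ / r and f₂^3 = cos θ / r. Let C^k̂_{îĵ} be the structure constants of the isotropy algebra ([λ₁,λ₂] = 0, [λ₁,λ₃] = −λ₂, [λ₂,λ₃] = λ₁, extended antisymmetrically in the lower indices) and C^K_{IJ} the structure constants of the symmetry algebra ([X₁,X₂] = 0, [X₁,X₃] = −X₂, [X₂,X₃] = X₁, extended antisymmetrically). Then for all I, J, k̂ and all x ∈ U: X_I(f_J^k̂)(x) − X_J(f_I^k̂)(x) − Σ_{î,ĵ} f_I^î(x) f_J^ĵ(x) C^k̂_{îĵ} = Σ_K C^K_{IJ} f_K^k̂(x), where X(f) denotes the directional derivative of f along the vector field X. -/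

import Mathlib

open Finset

lemma hproj (i : Fin 4) (x : Fin 4 → ℝ) : HasFDerivAt (fun x : Fin 4 → ℝ => x i)
    (ContinuousLinearMap.proj i : (Fin 4 → ℝ) →L[ℝ] ℝ) x :=
  (ContinuousLinearMap.proj i : (Fin 4 → ℝ) →L[ℝ] ℝ).hasFDerivAt

lemma fderiv_sin_div (x : Fin 4 → ℝ) (hx : x 2 ≠ 0) (v : Fin 4 → ℝ) :
    fderiv ℝ (fun x : Fin 4 → ℝ => Real.sin (x 3) / x 2) x v
      = Real.cos (x 3) * v 3 / x 2 - Real.sin (x 3) * v 2 / (x 2 ^ 2) := by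
  have hs := (Real.hasDerivAt_sin (x 3)).comp_hasFDerivAt x (hproj 3 x)
  have hi := (hasDerivAt_inv hx).comp_hasFDerivAt x (hproj 2 x)
  have h := hs.mul hi
  have h2 : (fun y : Fin 4 → ℝ => Real.sin (y 3) / y 2)
      = fun y => (Real.sin ∘ fun y : Fin 4 → ℝ => y 3) y * (Inv.inv ∘ fun y : Fin 4 → ℝ => y 2) y := by
    funext y; simp [div_eq_mul_inv]
  rw [h2, (show HasFDerivAt (fun y : Fin 4 → ℝ => (Real.sin ∘ fun y : Fin 4 → ℝ => y 3) y * (Inv.inv ∘ fun y : Fin 4 → ℝ => y 2) y) _ x from h).fderiv]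
  simp [ContinuousLinearMap.smul_apply, ContinuousLinearMap.proj_apply]
  field_simp
  ring

lemma fderiv_cos_div (x : Fin 4 → ℝ) (hx : x 2 ≠ 0) (v : Fin 4 → ℝ) :
    fderiv ℝ (fun x : Fin 4 → ℝ => Real.cos (x 3) / x 2) x v
      = -(Real.sin (x 3) * v 3) / x 2 - Real.cos (x 3) * v 2 / (x 2 ^ 2) := by
  have hs := (Real.hasDerivAt_cos (x 3)).comp_hasFDerivAt x (hproj 3 x)
  have hi := (hasDerivAt_inv hx).comp_hasFDerivAt x (hproj 2 x)
  have h := hs.mul hi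
  have h2 : (fun y : Fin 4 → ℝ => Real.cos (y 3) / y 2)
      = fun y => (Real.cos ∘ fun y : Fin 4 → ℝ => y 3) y * (Inv.inv ∘ fun y : Fin 4 → ℝ => y 2) y := by
    funext y; simp [div_eq_mul_inv]
  rw [h2, (show HasFDerivAt (fun y : Fin 4 → ℝ => (Real.cos ∘ fun y : Fin 4 → ℝ => y 3) y * (Inv.inv ∘ fun y : Fin 4 → ℝ => y 2) y) _ x from h).fderiv]
  simp [ContinuousLinearMap.smul_apply, ContinuousLinearMap.proj_apply]
  field_simp
  ring


/- Coordinates are `(u, v, r, θ) = (x 0, x 1, x 2, x 3)`. -/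

/-- The E(2) symmetry vector fields X₁, X₂, X₃. -/
noncomputable def XE2 : Fin 3 → (Fin 4 → ℝ) → (Fin 4 → ℝ) :=
  ![fun x => ![0, 0, -Real.cos (x 3), Real.sin (x 3) / x 2],
    fun x => ![0, 0, Real.sin (x 3), Real.cos (x 3) / x 2],
    fun _ => ![0, 0, 0, 1]]

/-- The functions `f I î`; the only nonzero components are
`f₁³ = sin θ / r` and `f₂³ = cos θ / r`. -/
noncomputable def fE2 : Fin 3 → Fin 3 → (Fin 4 → ℝ) → ℝ :=
  ![![fun _ => 0, fun _ => 0, fun x => Real.sin (x 3) / x 2],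
    ![fun _ => 0, fun _ => 0, fun x => Real.cos (x 3) / x 2],
    ![fun _ => 0, fun _ => 0, fun _ => 0]]

/-- The structure constants of e(2): `[λ₁,λ₂] = 0`, `[λ₁,λ₃] = −λ₂`,
`[λ₂,λ₃] = λ₁`, extended antisymmetrically; `CE2 k i j` is `C^k_{ij}`.
These are also the structure constants of the symmetry algebra. -/
def CE2 : Fin 3 → Fin 3 → Fin 3 → ℝ :=
  ![![![0, 0, 0], ![0, 0, 1], ![0, -1, 0]],
    ![![0, 0, -1], ![0, 0, 0], ![1, 0, 0]],
    ![![0, 0, 0], ![0, 0, 0], ![0, 0, 0]]]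

theorem stmt_16 (I J k : Fin 3) (x : Fin 4 → ℝ) (hx : x 2 ≠ 0) :
    fderiv ℝ (fE2 J k) x (XE2 I x) - fderiv ℝ (fE2 I k) x (XE2 J x)
      - ∑ i, ∑ j, fE2 I i x * fE2 J j x * CE2 k i j
    = ∑ K, CE2 K I J * fE2 K k x := by
  fin_cases I <;> fin_cases J <;> fin_cases k <;>
    simp [XE2, fE2, CE2, Fin.sum_univ_three, fderiv_sin_div x hx, fderiv_cos_div x hx,
      Matrix.vecHead, Matrix.vecTail] <;>
    ring
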